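/- Let N ≥ 1 and let T : ℝ^N → ℝ^{N×N} be a continuously differentiable matrix-valued map which is symmetric (T_{ij} = T_{ji}) and satisfies Σ_{k=1}^N (∂T_{kj}/∂V_i (V) − ∂T_{ki}/∂V_j (V)) V_k = 0 for all V ∈ ℝ^N and all i, j. Define W : ℝ^N → ℝ by W(x) = ∫₀¹ Σ_{i,j=1}^N T_{ij}(λx) λ x_i x_j dλ. Then W is differentiable and ∂W/∂x_k (x) = Σ_{i=1}^N T_{ki}(x) x_i for every x ∈ ℝ^N and every k. -/

import Mathlib

open Set Metric MeasureTheory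
open Set

/-- If `T` is continuously differentiable, symmetric, and satisfies the
weak closure condition `∑ k, (T_{kj,i} - T_{ki,j}) V_k = 0` everywhere, then the radial
primitive `W x = ∫₀¹ ∑_{i,j} T (λx) i j * λ * x i * x j dλ` is differentiable with
`∂W/∂x_k (x) = ∑ i, T x k i * x i`. -/
theorem stmt_3 (N : ℕ) (hN : 1 ≤ N)
    (T : (Fin N → ℝ) → Fin N → Fin N → ℝ)
    (hT : ∀ i j, ContDiff ℝ 1 fun V => T V i j)
    (hTsymm : ∀ V i j, T V i j = T V j i)
    (hweak : ∀ (V : Fin N → ℝ) (i j : Fin N),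
      (∑ k, (fderiv ℝ (fun W => T W k j) V (Pi.single i 1)
        - fderiv ℝ (fun W => T W k i) V (Pi.single j 1)) * V k) = 0)
    (W : (Fin N → ℝ) → ℝ)
    (hW : ∀ x : Fin N → ℝ,
      W x = ∫ l in (0:ℝ)..1, ∑ i, ∑ j, T (l • x) i j * l * x i * x j) :
    ∀ x : Fin N → ℝ, DifferentiableAt ℝ W x ∧
      ∀ k : Fin N, fderiv ℝ W x (Pi.single k 1) = ∑ i, T x k i * x i := by
  intro x
  have hTdiff : ∀ i j, Differentiable ℝ (fun V => T V i j) :=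
    fun i j => (hT i j).differentiable one_ne_zero
  set G : ((Fin N → ℝ) × ℝ) → ℝ :=
    fun p => ∑ i, ∑ j, T (p.2 • p.1) i j * p.2 * p.1 i * p.1 j with hGdef
  have hG : ContDiff ℝ 1 G := by
    apply ContDiff.sum; intro i _; apply ContDiff.sum; intro j _
    exact ((((hT i j).comp (contDiff_snd.smul contDiff_fst)).mul contDiff_snd).mul
        ((ContinuousLinearMap.proj i).contDiff.comp contDiff_fst)).mul
        ((ContinuousLinearMap.proj j).contDiff.comp contDiff_fst)
  set F' : (Fin N → ℝ) → ℝ → ((Fin N → ℝ) →L[ℝ] ℝ) :=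
    fun y l => (fderiv ℝ G (y, l)).comp ((ContinuousLinearMap.id ℝ (Fin N → ℝ)).prod 0)
    with hF'def
  have hF'diff : ∀ (y : Fin N → ℝ) (l : ℝ),
      HasFDerivAt (fun z => G (z, l)) (F' y l) y := by
    intro y l
    have h1 : HasFDerivAt G (fderiv ℝ G (y, l)) (y, l) :=
      ((hG.differentiable one_ne_zero) (y, l)).hasFDerivAt
    have h2 : HasFDerivAt (fun z : Fin N → ℝ => (z, l))
        ((ContinuousLinearMap.id ℝ (Fin N → ℝ)).prod 0) y :=
      (hasFDerivAt_id y).prodMk (hasFDerivAt_const l y)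
    exact h1.comp y h2
  have hF'cont : Continuous (fun p : (Fin N → ℝ) × ℝ => F' p.1 p.2) :=
    (hG.continuous_fderiv one_ne_zero).clm_comp continuous_const
  -- continuity of F in l for fixed y
  have hFcont : ∀ y : Fin N → ℝ, Continuous (fun l : ℝ => G (y, l)) := fun y =>
    hG.continuous.comp (continuous_const.prodMk continuous_id)
  have hF'contx : Continuous (fun l : ℝ => F' x l) :=
    hF'cont.comp (continuous_const.prodMk continuous_id)
  -- bound on compact set
  obtain ⟨C, hC⟩ := ((isCompact_closedBall x 1).prod isCompact_Icc).exists_bound_of_continuousOn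
    (s := closedBall x 1 ×ˢ Icc (0:ℝ) 1) hF'cont.continuousOn
  -- main differentiation under the integral
  have key : HasFDerivAt (fun y => ∫ l in (0:ℝ)..1, G (y, l))
      (∫ l in (0:ℝ)..1, F' x l) x := by
    apply intervalIntegral.hasFDerivAt_integral_of_dominated_of_fderiv_le
      (bound := fun _ => C) (F' := F') (ball_mem_nhds x one_pos)
    · exact Filter.Eventually.of_forall fun y => (hFcont y).aestronglyMeasurable
    · exact (hFcont x).intervalIntegrable 0 1
    · exact hF'contx.aestronglyMeasurable
    · refine Filter.Eventually.of_forall fun t ht y hy => ?_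
      rw [uIoc_of_le zero_le_one] at ht
      exact hC (y, t) ⟨ball_subset_closedBall hy, Ioc_subset_Icc_self ht⟩
    · exact intervalIntegrable_const
    · exact Filter.Eventually.of_forall fun t _ y _ => hF'diff y t
  have hWd : HasFDerivAt W (∫ l in (0:ℝ)..1, F' x l) x := by
    have : W = fun y => ∫ l in (0:ℝ)..1, G (y, l) :=
      funext fun y => (hW y).trans (by simp only [hGdef])
    rw [this]; exact key
  refine ⟨hWd.differentiableAt, ?_⟩
  intro k
  rw [hWd.fderiv]
  have hint : IntervalIntegrable (F' x) volume 0 1 := hF'contx.intervalIntegrable 0 1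
  rw [ContinuousLinearMap.intervalIntegral_apply hint (Pi.single k 1)]
  -- now FTC
  have hφ : ∀ l : ℝ, HasDerivAt (fun l' => (∑ i, T (l' • x) k i * x i) * (l' * l'))
      (F' x l (Pi.single k 1)) l := by
    intro l
    set e : Fin N → ℝ := Pi.single k 1 with he
    have h2 : HasDerivAt (fun t : ℝ => x + t • e) (e) 0 := by
      simpa using ((hasDerivAt_id (0:ℝ)).smul_const (e)).const_add x
    have hx0 : x + (0:ℝ) • e = x := by simp
    have h3 : HasFDerivAt (fun z => G (z, l)) (F' x l) (x + (0:ℝ) • e) := by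
      rw [hx0]; exact hF'diff x l
    have hdirA : HasDerivAt (fun t : ℝ => G (x + t • e, l))
        (F' x l (e)) 0 := h3.comp_hasDerivAt (f := fun t : ℝ => x + t • e) 0 h2
    have funeq : (fun t : ℝ => G (x + t • e, l)) =
        (fun t : ℝ => ∑ i, ∑ j, T (l • (x + t • e)) i j * l *
          (x + t • e) i * (x + t • e) j) := by
      funext t; simp only [hGdef]
    rw [funeq] at hdirA
    -- explicit per-term derivative
    have hterm : ∀ i j : Fin N, HasDerivAt
        (fun t : ℝ => T (l • (x + t • e)) i j * l *
          (x + t • e) i * (x + t • e) j)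
        (fderiv ℝ (fun V => T V i j) (l • x) (e) * l * l * x i * x j
          + T (l • x) i j * l * (e i * x j + x i * e j)) 0 := by
      intro i j
      have hγ : HasDerivAt (fun t : ℝ => l • (x + t • e)) (l • e) 0 :=
        h2.const_smul l
      have hlx0 : l • (x + (0:ℝ) • e) = l • x := by rw [hx0]
      have hfd : HasFDerivAt (fun V => T V i j)
          (fderiv ℝ (fun V => T V i j) (l • x)) (l • (x + (0:ℝ) • e)) := by
        rw [hlx0]; exact (hTdiff i j (l • x)).hasFDerivAt
      have hA : HasDerivAt (fun t : ℝ => T (l • (x + t • e)) i j)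
          (fderiv ℝ (fun V => T V i j) (l • x) (l • e)) 0 :=
        hfd.comp_hasDerivAt (f := fun t : ℝ => l • (x + t • e)) 0 hγ
      have hB : ∀ m : Fin N, HasDerivAt (fun t : ℝ => (x + t • e) m)
          (e m) 0 := by
        intro m
        simpa using ((hasDerivAt_id (0:ℝ)).mul_const ((e : Fin N → ℝ) m)).const_add (x m)
      have hmix := ((hA.mul_const l).mul (hB i)).mul (hB j)
      convert hmix using 1
      · rfl
      · rfl
      · rfl
      simp only [hx0, _root_.map_smul, smul_eq_mul, Pi.mul_apply]
      ring
    have hdirB : HasDerivAt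
        (fun t : ℝ => ∑ i, ∑ j, T (l • (x + t • e)) i j * l *
          (x + t • e) i * (x + t • e) j)
        (∑ i, ∑ j, (fderiv ℝ (fun V => T V i j) (l • x) (e) * l * l * x i * x j
          + T (l • x) i j * l * (e i * x j + x i * e j))) 0 :=
      HasDerivAt.fun_sum fun i _ => HasDerivAt.fun_sum fun j _ => hterm i j
    have hval : F' x l (e) =
        ∑ i, ∑ j, (fderiv ℝ (fun V => T V i j) (l • x) (e) * l * l * x i * x j
          + T (l • x) i j * l * (e i * x j + x i * e j)) :=
      hdirA.unique hdirB
    -- derivative of φ with combinators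
    have hS : ∀ i : Fin N, HasDerivAt (fun l' : ℝ => T (l' • x) k i)
        (fderiv ℝ (fun V => T V k i) (l • x) x) l := by
      intro i
      have hγ2 : HasDerivAt (fun l' : ℝ => l' • x) x l := by
        simpa using (hasDerivAt_id l).smul_const x
      exact (hTdiff k i (l • x)).hasFDerivAt.comp_hasDerivAt (f := fun l' : ℝ => l' • x) l hγ2
    have hφ0 := (HasDerivAt.fun_sum (fun i (_ : i ∈ Finset.univ) => (hS i).mul_const (x i))).mul
      ((hasDerivAt_id l).mul (hasDerivAt_id l))
    -- the algebraic identity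
    have hID : ∑ i, ∑ j, (fderiv ℝ (fun V => T V i j) (l • x) (e) * l * l * x i * x j
          + T (l • x) i j * l * (e i * x j + x i * e j))
        = (∑ i, fderiv ℝ (fun V => T V k i) (l • x) x * x i) * (l * l)
          + (∑ i, T (l • x) k i * x i) * (1 * l + l * 1) := by
      rw [he]
      simp only [Finset.sum_add_distrib]
      congr 1
      · -- derivative part, uses the weak closure condition
        have hsym : ∀ m i : Fin N, (fun V => T V m i) = (fun V => T V i m) :=
          fun m i => funext fun V => hTsymm V m i
        have hc : ∀ j : Fin N,
            ∑ m, fderiv ℝ (fun V => T V m j) (l • x) (Pi.single k 1) * (l * x m)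
            = ∑ m, fderiv ℝ (fun V => T V m k) (l • x) (Pi.single j 1) * (l * x m) := by
          intro j
          have h0 := hweak (l • x) k j
          simp only [Pi.smul_apply, smul_eq_mul, sub_mul, Finset.sum_sub_distrib,
            sub_eq_zero] at h0
          exact h0
        have ha : ∀ i : Fin N, fderiv ℝ (fun V => T V k i) (l • x) x
            = ∑ m, x m * fderiv ℝ (fun V => T V k i) (l • x) (Pi.single m 1) := by
          intro i
          have hb : ∀ m : Fin N, (fun j => if m = j then (1:ℝ) else 0) = Pi.single m 1 :=
            fun m => funext fun j => by simp [Pi.single_apply, eq_comm]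
          have h := ((fderiv ℝ (fun V => T V k i) (l • x)) :
            (Fin N → ℝ) →ₗ[ℝ] ℝ).pi_apply_eq_sum_univ x
          simpa [smul_eq_mul, hb] using h
        calc ∑ i, ∑ j, fderiv ℝ (fun V => T V i j) (l • x) (Pi.single k 1) * l * l * x i * x j
            = ∑ j, ∑ m, fderiv ℝ (fun V => T V m j) (l • x) (Pi.single k 1) * (l * x m) * (l * x j) := by
              rw [Finset.sum_comm]
              exact Finset.sum_congr rfl fun j _ => Finset.sum_congr rfl fun m _ => by ring
          _ = ∑ j, ∑ m, fderiv ℝ (fun V => T V m k) (l • x) (Pi.single j 1) * (l * x m) * (l * x j) := by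
              refine Finset.sum_congr rfl fun j _ => ?_
              rw [← Finset.sum_mul, ← Finset.sum_mul, hc j]
          _ = ∑ j, ∑ m, fderiv ℝ (fun V => T V k m) (l • x) (Pi.single j 1) * (l * x m) * (l * x j) := by
              refine Finset.sum_congr rfl fun j _ => Finset.sum_congr rfl fun m _ => ?_
              rw [hsym m k]
          _ = ∑ i, (∑ m, x m * fderiv ℝ (fun V => T V k i) (l • x) (Pi.single m 1)) * x i * (l * l) := by
              rw [Finset.sum_comm]
              refine Finset.sum_congr rfl fun i _ => ?_
              rw [Finset.sum_mul, Finset.sum_mul]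
              exact Finset.sum_congr rfl fun m _ => by ring
          _ = (∑ i, fderiv ℝ (fun V => T V k i) (l • x) x * x i) * (l * l) := by
              rw [Finset.sum_mul]
              exact Finset.sum_congr rfl fun i _ => by rw [ha i]
      · -- zeroth order part, uses symmetry
        have h1 : ∀ i j : Fin N,
            T (l • x) i j * l * ((Pi.single k 1 : Fin N → ℝ) i * x j
              + x i * (Pi.single k 1 : Fin N → ℝ) j)
            = (if i = k then T (l • x) k j * l * x j else 0)
              + (if j = k then T (l • x) i k * l * x i else 0) := by
          intro i j
          simp only [Pi.single_apply]
          split_ifs with h h' h' <;> subst_vars <;> ring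
        calc ∑ i, ∑ j, T (l • x) i j * l * ((Pi.single k 1 : Fin N → ℝ) i * x j
              + x i * (Pi.single k 1 : Fin N → ℝ) j)
            = ∑ i, ∑ j, ((if i = k then T (l • x) k j * l * x j else 0)
              + (if j = k then T (l • x) i k * l * x i else 0)) := by
              exact Finset.sum_congr rfl fun i _ => Finset.sum_congr rfl fun j _ => h1 i j
          _ = (∑ j, T (l • x) k j * l * x j) + (∑ i, T (l • x) i k * l * x i) := by
              simp only [Finset.sum_add_distrib]
              congr 1
              · rw [Finset.sum_comm]
                simp [Finset.sum_ite_eq', Finset.mem_univ]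
              · simp [Finset.sum_ite_eq', Finset.mem_univ]
          _ = (∑ i, T (l • x) k i * x i) * (1 * l + l * 1) := by
              have h2 : ∀ i : Fin N, T (l • x) i k = T (l • x) k i := fun i => hTsymm _ i k
              simp only [h2, Finset.sum_mul]
              rw [← Finset.sum_add_distrib]
              exact Finset.sum_congr rfl fun i _ => by ring
    rw [hval, hID]
    exact hφ0
  have hintk : IntervalIntegrable (fun l => F' x l (Pi.single k 1)) volume 0 1 :=
    (hF'contx.clm_apply continuous_const).intervalIntegrable 0 1
  rw [intervalIntegral.integral_eq_sub_of_hasDerivAt (fun t _ => hφ t) hintk]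
  simp
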